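/- Let M > 0, a > 0 and r > 2M be real numbers. Then a³/√(a² + r²) < ∫_r^∞ s·(1 − 2M/s + s²/a²)^(−3/2) ds < a³/r. -/

import Mathlib

open MeasureTheory

open Set Filter Real Topology

lemma mcv_aux_deriv (a : ℝ) (ha : 0 < a) (x : ℝ) :
    HasDerivAt (fun s : ℝ => -(a^2) * (1 + s^2/a^2) ^ (-(1:ℝ)/2))
      (x * (1 + x^2/a^2) ^ (-(3:ℝ)/2)) x := by
  have hb : (0:ℝ) < 1 + x^2/a^2 := by positivity
  have hinner : HasDerivAt (fun s : ℝ => 1 + s^2/a^2) (2*x/a^2) x := by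
    have := ((hasDerivAt_pow 2 x).div_const (a^2)).const_add (1:ℝ)
    simpa using this
  have h := (hinner.rpow_const (p := -(1:ℝ)/2) (Or.inl hb.ne')).const_mul (-(a^2))
  refine h.congr_deriv ?_
  rw [show (-(1:ℝ)/2 - 1) = -(3:ℝ)/2 by norm_num]
  field_simp

lemma mcv_aux_tendsto (a : ℝ) (ha : 0 < a) :
    Tendsto (fun s : ℝ => -(a^2) * (1 + s^2/a^2) ^ (-(1:ℝ)/2)) atTop (𝓝 0) := by
  have h1 : Tendsto (fun s : ℝ => 1 + s^2/a^2) atTop atTop := by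
    apply tendsto_atTop_add_const_left
    exact (tendsto_pow_atTop two_ne_zero).atTop_div_const (by positivity)
  have h2 : Tendsto (fun y : ℝ => y ^ (-(1:ℝ)/2)) atTop (𝓝 0) := by
    have := tendsto_rpow_neg_atTop (y := 1/2) (by norm_num)
    simpa [neg_div] using this
  have := (h2.comp h1).const_mul (-(a^2))
  simpa using this

lemma mcv_aux_sqrt_val (a r : ℝ) (ha : 0 < a) (hr : 0 < r) :
    a^2 * (1 + r^2/a^2) ^ (-(1:ℝ)/2) = a^3 / Real.sqrt (a^2 + r^2) := by
  have h1 : (1:ℝ) + r^2/a^2 = (a^2 + r^2)/a^2 := by field_simp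
  have hpos : (0:ℝ) < (a^2+r^2)/a^2 := by positivity
  rw [h1, show (-(1:ℝ)/2) = -(1/2 : ℝ) by norm_num, Real.rpow_neg hpos.le,
    ← Real.sqrt_eq_rpow, Real.sqrt_div (by positivity), Real.sqrt_sq ha.le]
  have h2 : Real.sqrt (a^2+r^2) > 0 := by positivity
  field_simp

lemma mcv_lower_integrable (a r : ℝ) (ha : 0 < a) (hr : 0 < r) :
    IntegrableOn (fun s : ℝ => s * (1 + s^2/a^2) ^ (-(3:ℝ)/2)) (Set.Ioi r) :=
  integrableOn_Ioi_deriv_of_nonneg' (fun x _ => mcv_aux_deriv a ha x)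
    (fun x hx => mul_nonneg (le_of_lt (hr.trans hx)) (Real.rpow_nonneg (by positivity) _))
    (mcv_aux_tendsto a ha)

lemma mcv_lower_int_val (a r : ℝ) (ha : 0 < a) (hr : 0 < r) :
    ∫ s in Set.Ioi r, s * (1 + s^2/a^2) ^ (-(3:ℝ)/2) = a^3 / Real.sqrt (a^2 + r^2) := by
  rw [integral_Ioi_of_hasDerivAt_of_tendsto' (fun x _ => mcv_aux_deriv a ha x)
    (mcv_lower_integrable a r ha hr) (mcv_aux_tendsto a ha)]
  rw [zero_sub, neg_mul, neg_neg]
  exact mcv_aux_sqrt_val a r ha hr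

lemma mcv_aux_upper_eq (a s : ℝ) (ha : 0 < a) (hs : 0 < s) :
    s * (s^2/a^2) ^ (-(3:ℝ)/2) = a^3 * s ^ (-(2:ℝ)) := by
  rw [Real.div_rpow (by positivity) (by positivity),
    ← Real.rpow_natCast s 2, ← Real.rpow_natCast a 2,
    ← Real.rpow_mul hs.le, ← Real.rpow_mul ha.le,
    show (-(2:ℝ)) = ((-2 : ℤ) : ℝ) by norm_num,
    show (((2:ℕ):ℝ) * (-(3:ℝ)/2)) = ((-3 : ℤ) : ℝ) by norm_num,
    Real.rpow_intCast, Real.rpow_intCast, Real.rpow_intCast]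
  have h1 : s ≠ 0 := hs.ne'
  have h2 : a ≠ 0 := ha.ne'
  field_simp

lemma mcv_aux_upper_int (a r : ℝ) (hr : 0 < r) :
    ∫ s in Set.Ioi r, a^3 * s ^ (-(2:ℝ)) = a^3 / r := by
  rw [MeasureTheory.integral_const_mul, integral_Ioi_rpow_of_lt (by norm_num) hr]
  norm_num [Real.rpow_neg_one]
  rw [div_eq_mul_inv]

/-- Bounds for the integral `∫_r^∞ s·κ(s)^(-3/2) ds` where
`κ(s) = 1 - 2M/s + s²/a²` is the allowed-region function of the open (K = -1)
McVittie spacetime, for `r > 2M`. -/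
theorem mcvittie_integral_bounds (M a r : ℝ) (hM : 0 < M) (ha : 0 < a) (hr : 2 * M < r) :
    a ^ 3 / Real.sqrt (a ^ 2 + r ^ 2) <
      (∫ s in Set.Ioi r, s * (1 - 2 * M / s + s ^ 2 / a ^ 2) ^ (-(3 : ℝ) / 2)) ∧
    (∫ s in Set.Ioi r, s * (1 - 2 * M / s + s ^ 2 / a ^ 2) ^ (-(3 : ℝ) / 2)) < a ^ 3 / r := by
  have hr0 : 0 < r := lt_trans (by positivity) hr
  set l : ℝ → ℝ := fun s => s * (1 + s^2/a^2) ^ (-(3:ℝ)/2) with hldef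
  set f : ℝ → ℝ := fun s => s * (1 - 2 * M / s + s ^ 2 / a ^ 2) ^ (-(3:ℝ)/2) with hfdef
  set u : ℝ → ℝ := fun s => a^3 * s ^ (-(2:ℝ)) with hudef
  have hbounds : ∀ s ∈ Set.Ioi r, 0 < s ∧ (0 < 1 - 2*M/s + s^2/a^2) ∧ l s < f s ∧ f s < u s := by
    intro s hs
    have hs0 : 0 < s := hr0.trans hs
    have hsM : 2*M < s := hr.trans hs
    have hk1 : (0:ℝ) < s^2/a^2 := by positivity
    have hdiv : 2*M/s < 1 := (div_lt_one hs0).mpr hsM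
    have hklow : s^2/a^2 < 1 - 2*M/s + s^2/a^2 := by linarith
    have hkhigh : 1 - 2*M/s + s^2/a^2 < 1 + s^2/a^2 := by
      have : 0 < 2*M/s := by positivity
      linarith
    refine ⟨hs0, lt_trans hk1 hklow, ?_, ?_⟩
    · exact mul_lt_mul_of_pos_left
        (Real.rpow_lt_rpow_of_neg (lt_trans hk1 hklow) hkhigh (by norm_num)) hs0
    · calc f s < s * (s^2/a^2) ^ (-(3:ℝ)/2) :=
          mul_lt_mul_of_pos_left (Real.rpow_lt_rpow_of_neg hk1 hklow (by norm_num)) hs0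
        _ = u s := mcv_aux_upper_eq a s ha hs0
  have hu_int : IntegrableOn u (Set.Ioi r) :=
    (integrableOn_Ioi_rpow_of_lt (by norm_num) hr0).const_mul (a^3)
  have hl_int : IntegrableOn l (Set.Ioi r) := mcv_lower_integrable a r ha hr0
  have hf_cont : ContinuousOn f (Set.Ioi r) := by
    apply ContinuousOn.mul continuousOn_id
    apply ContinuousOn.rpow_const
    · exact (continuousOn_const.sub (continuousOn_const.div continuousOn_id
        (fun x hx => (hr0.trans hx).ne'))).add (Continuous.continuousOn (by continuity))
    · intro x hx
      exact Or.inl (hbounds x hx).2.1.ne'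
  have hf_meas : AEStronglyMeasurable f (volume.restrict (Set.Ioi r)) :=
    hf_cont.aestronglyMeasurable measurableSet_Ioi
  have hf_int : IntegrableOn f (Set.Ioi r) := by
    apply Integrable.mono' hu_int hf_meas
    filter_upwards [ae_restrict_mem measurableSet_Ioi] with s hs
    obtain ⟨hs0, hbase, hlf, hfu⟩ := hbounds s hs
    rw [Real.norm_eq_abs,
      abs_of_nonneg (mul_nonneg hs0.le (Real.rpow_nonneg hbase.le _))]
    exact hfu.le
  have key : ∀ (g h : ℝ → ℝ), IntegrableOn g (Set.Ioi r) → IntegrableOn h (Set.Ioi r) →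
      (∀ s ∈ Set.Ioi r, g s < h s) →
      (∫ s in Set.Ioi r, g s) < ∫ s in Set.Ioi r, h s := by
    intro g h hg hh hlt
    have hpos : 0 < ∫ s in Set.Ioi r, (h s - g s) := by
      rw [setIntegral_pos_iff_support_of_nonneg_ae]
      · have hsub : Set.Ioi r ⊆ Function.support (fun s => h s - g s) ∩ Set.Ioi r :=
          fun s hs => ⟨ne_of_gt (sub_pos.mpr (hlt s hs)), hs⟩
        calc (0 : ENNReal) < volume (Set.Ioi r) := by simp [Real.volume_Ioi]
          _ ≤ _ := measure_mono hsub
      · filter_upwards [ae_restrict_mem measurableSet_Ioi] with s hs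
        exact sub_nonneg.mpr (hlt s hs).le
      · exact hh.sub hg
    rw [integral_sub hh hg] at hpos
    linarith
  constructor
  · rw [← mcv_lower_int_val a r ha hr0]
    exact key l f hl_int hf_int (fun s hs => (hbounds s hs).2.2.1)
  · rw [← mcv_aux_upper_int a r hr0]
    exact key f u hf_int hu_int (fun s hs => (hbounds s hs).2.2.2)
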